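/- Let V be a finite set, J a multigraph on V, k an integer, and μ' = ⌈(k−1)/2⌉. Let R be a finite laminar family of subsets of V and S ⊆ V with 1 ≤ |R(S)| ≤ |R(V\S)|. Assume: (i) for every inclusion-minimal member R of R(S), d_J(R∩S, R\S) ≥ μ'; (ii) if R(S) has a unique maximal member R (one containing all other members of R(S)), then 2·d_J((V\R)∩S, (V\R)\S) ≥ k − 4. Then d_J(S) ≥ k − 2. -/

import Mathlib

open Finset

variable {V : Type*} [Fintype V] [DecidableEq V]

/-- `d_m(S,T)`: total multiplicity of edges of the multigraph `m` with one end in `S` and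
the other in `T` (for disjoint `S`, `T`). -/
def dBetween (m : V → V → ℕ) (S T : Finset V) : ℕ := ∑ u ∈ S, ∑ v ∈ T, m u v

/-- `d_m(S) = d_m(S, V \ S)`. -/
def degS (m : V → V → ℕ) (S : Finset V) : ℕ := dBetween m S Sᶜ

/-- A family of sets is laminar if any two members are either disjoint or nested. -/
def LaminarF (F : Finset (Finset V)) : Prop :=
  ∀ A ∈ F, ∀ B ∈ F, Disjoint A B ∨ A ⊆ B ∨ B ⊆ A

/-- `R(S)`: the members of the family `R` that overlap `S`, i.e. those `A ∈ R` with
`A ∩ S`, `A \ S` and `S \ A` all nonempty. -/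
def overlapFam (R : Finset (Finset V)) (S : Finset V) : Finset (Finset V) :=
  R.filter fun A => (A ∩ S).Nonempty ∧ (A \ S).Nonempty ∧ (S \ A).Nonempty

lemma dBetween_mono (J : V → V → ℕ) {S' S T' T : Finset V} (hS : S' ⊆ S) (hT : T' ⊆ T) :
    dBetween J S' T' ≤ dBetween J S T := by
  unfold dBetween
  calc ∑ u ∈ S', ∑ v ∈ T', J u v ≤ ∑ u ∈ S', ∑ v ∈ T, J u v :=
        Finset.sum_le_sum fun u _ => Finset.sum_le_sum_of_subset hT
    _ ≤ ∑ u ∈ S, ∑ v ∈ T, J u v := Finset.sum_le_sum_of_subset hS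

lemma dBetween_add_le (J : V → V → ℕ) {S₁ S₂ S T : Finset V} (hd : Disjoint S₁ S₂)
    (h1 : S₁ ⊆ S) (h2 : S₂ ⊆ S) :
    dBetween J S₁ T + dBetween J S₂ T ≤ dBetween J S T := by
  unfold dBetween
  rw [← Finset.sum_union hd]
  exact Finset.sum_le_sum_of_subset (Finset.union_subset h1 h2)

lemma pair_le_degS (J : V → V → ℕ) {A B : Finset V} (S : Finset V) (hd : Disjoint A B) :
    dBetween J (A ∩ S) (A \ S) + dBetween J (B ∩ S) (B \ S) ≤ degS J S := by
  have hsd : ∀ C : Finset V, C \ S ⊆ Sᶜ := by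
    intro C v hv
    simp only [Finset.mem_sdiff] at hv
    simpa [Finset.mem_compl] using hv.2
  calc dBetween J (A ∩ S) (A \ S) + dBetween J (B ∩ S) (B \ S)
      ≤ dBetween J (A ∩ S) Sᶜ + dBetween J (B ∩ S) Sᶜ :=
        Nat.add_le_add (dBetween_mono J (subset_refl _) (hsd A))
          (dBetween_mono J (subset_refl _) (hsd B))
    _ ≤ dBetween J S Sᶜ :=
        dBetween_add_le J (hd.mono Finset.inter_subset_left Finset.inter_subset_left)
          Finset.inter_subset_right Finset.inter_subset_right

lemma finset_exists_maximal_old {α : Type*} [PartialOrder α] (s : Finset α) (h : s.Nonempty) :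
    ∃ m ∈ s, ∀ x ∈ s, ¬ m < x := by
  obtain ⟨m, hm⟩ := Finset.exists_maximal h
  exact ⟨m, hm.prop, fun x hx hlt => lt_irrefl _ (lt_of_lt_of_le hlt (hm.2 hx hlt.le))⟩

lemma finset_exists_minimal_old {α : Type*} [PartialOrder α] (s : Finset α) (h : s.Nonempty) :
    ∃ m ∈ s, ∀ x ∈ s, ¬ x < m := by
  obtain ⟨m, hm⟩ := Finset.exists_minimal h
  exact ⟨m, hm.prop, fun x hx hlt => lt_irrefl _ (lt_of_lt_of_le hlt (hm.2 hx hlt.le))⟩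

/-- Lemma 5.7 -/
theorem degree_bound_overlapping_cut'
    (J : V → V → ℕ) (hJsymm : ∀ a b, J a b = J b a)
    (k : ℤ) (μ' : ℤ) (hμ : μ' = ⌈((k : ℚ) - 1) / 2⌉)
    (R : Finset (Finset V)) (hlam : LaminarF R) (S : Finset V)
    (h1 : 1 ≤ (overlapFam R S).card)
    (h2 : (overlapFam R S).card ≤ (overlapFam R Sᶜ).card)
    (hmin : ∀ A ∈ overlapFam R S, (∀ B ∈ overlapFam R S, ¬ B ⊂ A) →
      μ' ≤ (dBetween J (A ∩ S) (A \ S) : ℤ))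
    (hmax : ∀ A ∈ overlapFam R S, (∀ B ∈ overlapFam R S, B ⊆ A) →
      k - 4 ≤ 2 * (dBetween J (Aᶜ ∩ S) (Aᶜ \ S) : ℤ)) :
    k - 2 ≤ (degS J S : ℤ) := by
  have hne : (overlapFam R S).Nonempty := Finset.card_pos.mp h1
  have h2μ : k - 1 ≤ 2 * μ' := by
    have h := Int.le_ceil (((k : ℚ) - 1) / 2)
    rw [← hμ] at h
    have : (k : ℚ) - 1 ≤ 2 * (μ' : ℚ) := by linarith
    exact_mod_cast this
  obtain ⟨A, hA, hAmax⟩ := finset_exists_maximal_old (overlapFam R S) hne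
  by_cases hall : ∀ B ∈ overlapFam R S, B ⊆ A
  · -- unique maximal member
    obtain ⟨M, hM, hMmin⟩ := finset_exists_minimal_old (overlapFam R S) hne
    have hμM := hmin M hM hMmin
    have hk4 := hmax A hA hall
    have hmono : dBetween J (M ∩ S) (M \ S) ≤ dBetween J (A ∩ S) (A \ S) :=
      dBetween_mono J (Finset.inter_subset_inter_right (hall M hM))
        (Finset.sdiff_subset_sdiff (hall M hM) (subset_refl _))
    have hsum := pair_le_degS J (A := A) (B := Aᶜ) S disjoint_compl_right
    have hmono' : (dBetween J (M ∩ S) (M \ S) : ℤ) ≤ (dBetween J (A ∩ S) (A \ S) : ℤ) := by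
      exact_mod_cast hmono
    have hsum' : (dBetween J (A ∩ S) (A \ S) : ℤ) + (dBetween J (Aᶜ ∩ S) (Aᶜ \ S) : ℤ)
        ≤ (degS J S : ℤ) := by exact_mod_cast hsum
    omega
  · push_neg at hall
    obtain ⟨B, hB, hBA⟩ := hall
    have hAR : A ∈ R := (Finset.mem_filter.mp hA).1
    have hBR : B ∈ R := (Finset.mem_filter.mp hB).1
    have hdisj : Disjoint A B := by
      rcases hlam A hAR B hBR with h | h | h
      · exact h
      · rcases eq_or_ssubset_of_subset h with rfl | h'
        · exact absurd (subset_refl A) hBA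
        · exact absurd h' (hAmax B hB)
      · exact absurd h hBA
    have hne₁ : ((overlapFam R S).filter (· ⊆ A)).Nonempty :=
      ⟨A, Finset.mem_filter.mpr ⟨hA, subset_refl A⟩⟩
    have hne₂ : ((overlapFam R S).filter (· ⊆ B)).Nonempty :=
      ⟨B, Finset.mem_filter.mpr ⟨hB, subset_refl B⟩⟩
    obtain ⟨M₁, hM₁, hM₁min⟩ := finset_exists_minimal_old _ hne₁
    obtain ⟨M₂, hM₂, hM₂min⟩ := finset_exists_minimal_old _ hne₂
    obtain ⟨hM₁o, hM₁A⟩ := Finset.mem_filter.mp hM₁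
    obtain ⟨hM₂o, hM₂B⟩ := Finset.mem_filter.mp hM₂
    have hμ₁ := hmin M₁ hM₁o (fun C hC hlt =>
      hM₁min C (Finset.mem_filter.mpr ⟨hC, hlt.subset.trans hM₁A⟩) hlt)
    have hμ₂ := hmin M₂ hM₂o (fun C hC hlt =>
      hM₂min C (Finset.mem_filter.mpr ⟨hC, hlt.subset.trans hM₂B⟩) hlt)
    have hsum := pair_le_degS J (A := M₁) (B := M₂) S (hdisj.mono hM₁A hM₂B)
    have hsum' : (dBetween J (M₁ ∩ S) (M₁ \ S) : ℤ) + (dBetween J (M₂ ∩ S) (M₂ \ S) : ℤ)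
        ≤ (degS J S : ℤ) := by exact_mod_cast hsum
    omega
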